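/- Let L be a Lie algebra over R_k that admits a Lie algebra lift to R_{k+1}, with residue-field reduction L̄. Then the set of all lifts of L to R_{k+1}, taken up to isomorphisms of Lie algebras inducing the identity on L, is in bijection with H²(L̄, ad). -/

import Mathlib

open Pointwise

/-- `Rmod R π m` is the quotient ring `R/π^m R`. -/
abbrev Rmod (R : Type) [CommRing R] (π : R) (m : ℕ) : Type :=
  R ⧸ Ideal.span {π ^ m}

section Setup

variable (R : Type) [CommRing R] (π : R) (k : ℕ)
variable (B : Type) [AddCommGroup B] [Module (Rmod R π (k + 1)) B]

/-- The image of `π` in `R_{k+1}`. -/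
noncomputable abbrev pbar : Rmod R π (k + 1) := Ideal.Quotient.mk _ π

/-- The submodule `π^k B` of `B`. -/
noncomputable abbrev pikB : Submodule (Rmod R π (k + 1)) B :=
  (pbar R π k) ^ k • (⊤ : Submodule (Rmod R π (k + 1)) B)

/-- The submodule `π B` of `B`. -/
noncomputable abbrev piB : Submodule (Rmod R π (k + 1)) B :=
  (pbar R π k) • (⊤ : Submodule (Rmod R π (k + 1)) B)

/-- `L = B/π^k B`, the reduction of `B` to a module over `R_k`. -/
noncomputable abbrev Lred := B ⧸ pikB R π k B

/-- `L̄ = B/πB`, the reduction of `B` to a vector space over the residue field. -/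
noncomputable abbrev Lbar := B ⧸ piB R π k B

/-- The reduction map `mod : B → L = B/π^k B`. -/
noncomputable abbrev modk : B →ₗ[Rmod R π (k + 1)] Lred R π k B :=
  (pikB R π k B).mkQ

/-- The reduction map `λ : B → L̄ = B/πB`. -/
noncomputable abbrev lam : B →ₗ[Rmod R π (k + 1)] Lbar R π k B :=
  (piB R π k B).mkQ

/-- `ψ : L̄ → B`, the map sending `x mod πB` to `π^k x`; its (corestriction to `π^k B`)
is the inverse of the canonical isomorphism `χ : π^k B → L̄`. -/
noncomputable def psi : Lbar R π k B →ₗ[Rmod R π (k + 1)] B :=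
  Submodule.liftQ _ ((pbar R π k) ^ k • (LinearMap.id : B →ₗ[Rmod R π (k + 1)] B))
    (by
      intro x hx
      rw [← SetLike.mem_coe, Submodule.coe_pointwise_smul, Set.mem_smul_set] at hx
      obtain ⟨y, -, rfl⟩ := hx
      have h0 : (pbar R π k) ^ k * pbar R π k = 0 := by
        rw [← pow_succ, ← map_pow, Ideal.Quotient.eq_zero_iff_mem]
        exact Ideal.mem_span_singleton_self _
      simp only [LinearMap.mem_ker, LinearMap.smul_apply, LinearMap.id_apply, smul_smul]
      rw [h0, zero_smul])

@[simp] theorem psi_apply (x : B) :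
    psi R π k B (lam R π k B x) = ((pbar R π k) ^ k) • x := rfl

end Setup


section Aux

variable (R : Type) [CommRing R] (π : R) (k : ℕ)
variable (B : Type) [AddCommGroup B] [Module (Rmod R π (k + 1)) B]

theorem pbar_pow_succ_eq : (pbar R π k) ^ (k + 1) = 0 := by
  rw [← map_pow, Ideal.Quotient.eq_zero_iff_mem]
  exact Ideal.mem_span_singleton_self _

theorem mem_pikB_iff (x : B) : x ∈ pikB R π k B ↔ ∃ y, (pbar R π k) ^ k • y = x := by
  rw [← SetLike.mem_coe, Submodule.coe_pointwise_smul, Set.mem_smul_set]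
  constructor
  · rintro ⟨y, -, rfl⟩; exact ⟨y, rfl⟩
  · rintro ⟨y, rfl⟩; exact ⟨y, trivial, rfl⟩

theorem mem_piB_iff (x : B) : x ∈ piB R π k B ↔ ∃ y, (pbar R π k) • y = x := by
  rw [← SetLike.mem_coe, Submodule.coe_pointwise_smul, Set.mem_smul_set]
  constructor
  · rintro ⟨y, -, rfl⟩; exact ⟨y, rfl⟩
  · rintro ⟨y, rfl⟩; exact ⟨y, trivial, rfl⟩

theorem psik_mem_pikB (x : B) : (pbar R π k) ^ k • x ∈ pikB R π k B :=
  (mem_pikB_iff R π k B _).2 ⟨x, rfl⟩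

theorem smul_pikB_eq_zero {c : B} (hc : c ∈ pikB R π k B) : (pbar R π k) • c = 0 := by
  obtain ⟨y, rfl⟩ := (mem_pikB_iff R π k B _).1 hc
  rw [smul_smul, ← pow_succ', pbar_pow_succ_eq, zero_smul]

theorem pikB_le_piB (hk : 1 ≤ k) : pikB R π k B ≤ piB R π k B := by
  intro x hx
  obtain ⟨y, rfl⟩ := (mem_pikB_iff R π k B _).1 hx
  obtain ⟨k', rfl⟩ : ∃ k', k = k' + 1 := ⟨k - 1, (Nat.succ_pred_eq_of_pos hk).symm⟩
  refine (mem_piB_iff R π _ B _).2 ⟨(pbar R π (k' + 1)) ^ k' • y, ?_⟩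
  rw [smul_smul, ← pow_succ']

theorem lam_surjective : Function.Surjective (lam R π k B) :=
  Submodule.mkQ_surjective _

theorem dvd_of_pk_mul_eq_zero [IsDomain R] (hπ : Irreducible π)
    {a : Rmod R π (k + 1)} (h : (pbar R π k) ^ k * a = 0) :
    ∃ b, a = pbar R π k * b := by
  obtain ⟨α, rfl⟩ := Ideal.Quotient.mk_surjective a
  rw [← map_pow, ← map_mul, Ideal.Quotient.eq_zero_iff_mem, Ideal.mem_span_singleton] at h
  obtain ⟨β, hβ⟩ := h
  have h2 : π ^ k * α = π ^ k * (π * β) := by rw [hβ]; ring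
  have hα : α = π * β := mul_left_cancel₀ (pow_ne_zero _ hπ.ne_zero) h2
  exact ⟨Ideal.Quotient.mk _ β, by rw [hα, map_mul]⟩

theorem mem_piB_of_pk_smul_eq_zero [IsDomain R] (hπ : Irreducible π)
    [Module.Free (Rmod R π (k + 1)) B] [Module.Finite (Rmod R π (k + 1)) B]
    {x : B} (h : (pbar R π k) ^ k • x = 0) : x ∈ piB R π k B := by
  classical
  set b := Module.Free.chooseBasis (Rmod R π (k + 1)) B with hb
  have hrepr : ∀ i, (pbar R π k) ^ k * b.repr x i = 0 := by
    intro i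
    have h1 := congrArg (fun z => b.repr z i) h
    simpa using h1
  choose d hd using fun i => dvd_of_pk_mul_eq_zero R π k hπ (hrepr i)
  refine (mem_piB_iff R π k B _).2 ⟨∑ i, d i • b i, ?_⟩
  rw [Finset.smul_sum]
  have h3 : ∀ i ∈ Finset.univ, (pbar R π k) • d i • b i = b.repr x i • b i := by
    intro i _
    rw [smul_smul, ← hd i]
  rw [Finset.sum_congr rfl h3, Module.Basis.sum_repr]

theorem psi_eq_zero_imp [IsDomain R] (hπ : Irreducible π)
    [Module.Free (Rmod R π (k + 1)) B] [Module.Finite (Rmod R π (k + 1)) B]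
    {u : Lbar R π k B} (h : psi R π k B u = 0) : u = 0 := by
  obtain ⟨x, rfl⟩ := lam_surjective R π k B u
  rw [psi_apply] at h
  exact (Submodule.Quotient.mk_eq_zero _).2 (mem_piB_of_pk_smul_eq_zero R π k B hπ h)

theorem psi_injective [IsDomain R] (hπ : Irreducible π)
    [Module.Free (Rmod R π (k + 1)) B] [Module.Finite (Rmod R π (k + 1)) B] :
    Function.Injective (psi R π k B) := by
  intro u v huv
  have h : psi R π k B (u - v) = 0 := by rw [map_sub, huv, sub_self]
  have := psi_eq_zero_imp R π k B hπ h
  exact sub_eq_zero.mp this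

theorem psi_range : LinearMap.range (psi R π k B) = pikB R π k B := by
  ext c
  simp only [LinearMap.mem_range]
  constructor
  · rintro ⟨u, rfl⟩
    obtain ⟨x, rfl⟩ := lam_surjective R π k B u
    rw [psi_apply]
    exact psik_mem_pikB R π k B x
  · intro hc
    obtain ⟨y, rfl⟩ := (mem_pikB_iff R π k B _).1 hc
    exact ⟨lam R π k B y, rfl⟩

end Aux
section Aux2

variable (R : Type) [CommRing R] [IsDomain R] (π : R) (k : ℕ)
variable (B : Type) [AddCommGroup B] [Module (Rmod R π (k + 1)) B]
variable [Module.Free (Rmod R π (k + 1)) B] [Module.Finite (Rmod R π (k + 1)) B]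

/-- `χ : π^k B → L̄`, the inverse of the corestriction of `ψ`. -/
noncomputable def chi (hπ : Irreducible π) :
    ↥(pikB R π k B) →ₗ[Rmod R π (k + 1)] Lbar R π k B :=
  (LinearEquiv.ofInjective (psi R π k B) (psi_injective R π k B hπ)).symm.toLinearMap ∘ₗ
    (LinearEquiv.ofEq _ _ (psi_range R π k B).symm).toLinearMap

theorem psi_chi (hπ : Irreducible π) (c : ↥(pikB R π k B)) :
    psi R π k B (chi R π k B hπ c) = c := by
  set e := LinearEquiv.ofInjective (psi R π k B) (psi_injective R π k B hπ) with he
  set c' : ↥(LinearMap.range (psi R π k B)) :=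
    (LinearEquiv.ofEq _ _ (psi_range R π k B).symm) c with hc'
  calc psi R π k B (chi R π k B hπ c) = psi R π k B (e.symm c') := rfl
    _ = ((e (e.symm c') : ↥(LinearMap.range (psi R π k B))) : B) :=
        (LinearEquiv.ofInjective_apply _ _).symm
    _ = (c' : B) := by rw [e.apply_symm_apply]
    _ = (c : B) := rfl

/-- Reduction of a linear map `E : B → B` with values in `π^k B` to a map `L̄ → L̄`. -/
noncomputable def red1 (hπ : Irreducible π) (E : B →ₗ[Rmod R π (k + 1)] B)
    (hE : ∀ x, E x ∈ pikB R π k B) :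
    Lbar R π k B →ₗ[Rmod R π (k + 1)] Lbar R π k B :=
  chi R π k B hπ ∘ₗ Submodule.liftQ (piB R π k B) (E.codRestrict _ hE) (by
    intro z hz
    obtain ⟨w, rfl⟩ := (mem_piB_iff R π k B _).1 hz
    rw [LinearMap.mem_ker]
    apply Subtype.ext
    rw [LinearMap.codRestrict_apply, map_smul]
    exact smul_pikB_eq_zero R π k B (hE w))

theorem red1_spec (hπ : Irreducible π) (E : B →ₗ[Rmod R π (k + 1)] B)
    (hE : ∀ x, E x ∈ pikB R π k B) (x : B) :
    psi R π k B (red1 R π k B hπ E hE (lam R π k B x)) = E x := by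
  unfold red1
  rw [LinearMap.comp_apply]
  have h1 : lam R π k B x = Submodule.Quotient.mk x := rfl
  rw [h1, Submodule.liftQ_apply, psi_chi, LinearMap.codRestrict_apply]

set_option maxHeartbeats 1000000 in
/-- Reduction of a bilinear map `D : B × B → B` with values in `π^k B` to `L̄ × L̄ → L̄`. -/
noncomputable def red2 (hπ : Irreducible π)
    (D : B →ₗ[Rmod R π (k + 1)] B →ₗ[Rmod R π (k + 1)] B)
    (hD : ∀ x y, D x y ∈ pikB R π k B) :
    Lbar R π k B →ₗ[Rmod R π (k + 1)] Lbar R π k B →ₗ[Rmod R π (k + 1)] Lbar R π k B :=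
  Submodule.liftQ (piB R π k B)
    { toFun := fun x => red1 R π k B hπ (D x) (hD x)
      map_add' := by
        intro x x'
        refine LinearMap.ext fun u => ?_
        obtain ⟨y, rfl⟩ := lam_surjective R π k B u
        apply psi_injective R π k B hπ
        rw [LinearMap.add_apply, map_add (psi R π k B), red1_spec, red1_spec, red1_spec, map_add,
          LinearMap.add_apply]
      map_smul' := by
        intro c x
        refine LinearMap.ext fun u => ?_
        obtain ⟨y, rfl⟩ := lam_surjective R π k B u
        apply psi_injective R π k B hπ
        rw [RingHom.id_apply, LinearMap.smul_apply, map_smul (psi R π k B), red1_spec, red1_spec, map_smul,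
          LinearMap.smul_apply] }
    (by
      intro z hz
      obtain ⟨w, rfl⟩ := (mem_piB_iff R π k B _).1 hz
      rw [LinearMap.mem_ker]
      show red1 R π k B hπ (D ((pbar R π k) • w)) _ = 0
      refine LinearMap.ext fun u => ?_
      obtain ⟨y, rfl⟩ := lam_surjective R π k B u
      apply psi_injective R π k B hπ
      rw [red1_spec, LinearMap.zero_apply, map_zero, map_smul, LinearMap.smul_apply]
      exact smul_pikB_eq_zero R π k B (hD w y))

theorem red2_spec (hπ : Irreducible π)
    (D : B →ₗ[Rmod R π (k + 1)] B →ₗ[Rmod R π (k + 1)] B)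
    (hD : ∀ x y, D x y ∈ pikB R π k B) (x y : B) :
    psi R π k B (red2 R π k B hπ D hD (lam R π k B x) (lam R π k B y)) = D x y := by
  unfold red2
  have h1 : lam R π k B x = Submodule.Quotient.mk x := rfl
  rw [h1, Submodule.liftQ_apply]
  exact red1_spec R π k B hπ (D x) (hD x) y

end Aux2
set_option linter.unusedSectionVars false
section Aux3

theorem bilin_antisymm {R M N : Type} [CommRing R] [AddCommGroup M] [AddCommGroup N]
    [Module R M] [Module R N] (f : M →ₗ[R] M →ₗ[R] N) (h : ∀ v, f v v = 0) (x y : M) :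
    f x y = -f y x := by
  have h2 := h (x + y)
  simp only [map_add, LinearMap.add_apply, h x, h y, zero_add, add_zero] at h2
  exact eq_neg_of_add_eq_zero_right h2

variable (R : Type) [CommRing R] [IsDomain R] (π : R) (k : ℕ)
variable (B : Type) [AddCommGroup B] [Module (Rmod R π (k + 1)) B]
variable [Module.Free (Rmod R π (k + 1)) B] [Module.Finite (Rmod R π (k + 1)) B]
variable (br0 : B →ₗ[Rmod R π (k + 1)] B →ₗ[Rmod R π (k + 1)] B)
variable (brb : Lbar R π k B →ₗ[Rmod R π (k + 1)] Lbar R π k B →ₗ[Rmod R π (k + 1)] Lbar R π k B)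

theorem lam_psi (hk : 1 ≤ k) (u : Lbar R π k B) : lam R π k B (psi R π k B u) = 0 := by
  obtain ⟨x, rfl⟩ := lam_surjective R π k B u
  rw [psi_apply]
  exact (Submodule.Quotient.mk_eq_zero _).2 (pikB_le_piB R π k B hk (psik_mem_pikB R π k B x))

theorem modk_psi (u : Lbar R π k B) : modk R π k B (psi R π k B u) = 0 := by
  obtain ⟨x, rfl⟩ := lam_surjective R π k B u
  rw [psi_apply]
  exact (Submodule.Quotient.mk_eq_zero _).2 (psik_mem_pikB R π k B x)

/-- difference of two lifts lies in `π^k B` -/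
theorem sub_mem_pikB (br : B →ₗ[Rmod R π (k + 1)] B →ₗ[Rmod R π (k + 1)] B)
    (hbr : ∀ x y, modk R π k B (br x y) = modk R π k B (br0 x y)) (x y : B) :
    br x y - br0 x y ∈ pikB R π k B := by
  have h : modk R π k B (br x y - br0 x y) = 0 := by rw [map_sub, hbr, sub_self]
  rwa [← LinearMap.mem_ker, Submodule.ker_mkQ] at h

section WithBrb
variable (hbrb : ∀ x y : B, lam R π k B (br0 x y) = brb (lam R π k B x) (lam R π k B y))
include hbrb

theorem brb_alt (halt0 : ∀ v, br0 v v = 0) (v : Lbar R π k B) : brb v v = 0 := by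
  obtain ⟨x, rfl⟩ := lam_surjective R π k B v
  rw [← hbrb, halt0, map_zero]

theorem lam_br (hk : 1 ≤ k) (br : B →ₗ[Rmod R π (k + 1)] B →ₗ[Rmod R π (k + 1)] B)
    (hbr : ∀ x y, modk R π k B (br x y) = modk R π k B (br0 x y)) (x y : B) :
    lam R π k B (br x y) = brb (lam R π k B x) (lam R π k B y) := by
  have h1 : lam R π k B (br x y - br0 x y) = 0 :=
    (Submodule.Quotient.mk_eq_zero _).2
      (pikB_le_piB R π k B hk (sub_mem_pikB R π k B br0 br hbr x y))
  rw [map_sub, sub_eq_zero] at h1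
  rw [h1, hbrb]

theorem lift_psi_left (hk : 1 ≤ k) (br : B →ₗ[Rmod R π (k + 1)] B →ₗ[Rmod R π (k + 1)] B)
    (hbr : ∀ x y, modk R π k B (br x y) = modk R π k B (br0 x y)) (u : Lbar R π k B) (y : B) :
    br (psi R π k B u) y = psi R π k B (brb u (lam R π k B y)) := by
  obtain ⟨x, rfl⟩ := lam_surjective R π k B u
  rw [psi_apply]
  have h1 : br ((pbar R π k) ^ k • x) y = (pbar R π k) ^ k • br x y := by
    rw [map_smul, LinearMap.smul_apply]
  rw [h1, ← psi_apply, lam_br R π k B br0 brb hbrb hk br hbr]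

theorem lift_psi_right (hk : 1 ≤ k) (br : B →ₗ[Rmod R π (k + 1)] B →ₗ[Rmod R π (k + 1)] B)
    (hbr : ∀ x y, modk R π k B (br x y) = modk R π k B (br0 x y)) (x : B) (u : Lbar R π k B) :
    br x (psi R π k B u) = psi R π k B (brb (lam R π k B x) u) := by
  obtain ⟨y, rfl⟩ := lam_surjective R π k B u
  rw [psi_apply, map_smul, ← psi_apply, lam_br R π k B br0 brb hbrb hk br hbr]

theorem lift_psi_both (hk : 1 ≤ k) (br : B →ₗ[Rmod R π (k + 1)] B →ₗ[Rmod R π (k + 1)] B)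
    (hbr : ∀ x y, modk R π k B (br x y) = modk R π k B (br0 x y)) (u v : Lbar R π k B) :
    br (psi R π k B u) (psi R π k B v) = 0 := by
  rw [lift_psi_left R π k B br0 brb hbrb hk br hbr, lam_psi R π k B hk, map_zero, map_zero]

end WithBrb
end Aux3
section Aux4
set_option linter.unusedSectionVars false

variable (R : Type) [CommRing R] [IsDomain R] (π : R) (k : ℕ)
variable (B : Type) [AddCommGroup B] [Module (Rmod R π (k + 1)) B]
variable [Module.Free (Rmod R π (k + 1)) B] [Module.Finite (Rmod R π (k + 1)) B]
variable (br0 : B →ₗ[Rmod R π (k + 1)] B →ₗ[Rmod R π (k + 1)] B)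
variable (brb : Lbar R π k B →ₗ[Rmod R π (k + 1)] Lbar R π k B →ₗ[Rmod R π (k + 1)] Lbar R π k B)

/-- the lift of `L` associated to a 2-form `ω` -/
noncomputable def Wbr
    (ω : Lbar R π k B →ₗ[Rmod R π (k + 1)] Lbar R π k B →ₗ[Rmod R π (k + 1)] Lbar R π k B) :
    B →ₗ[Rmod R π (k + 1)] B →ₗ[Rmod R π (k + 1)] B :=
  br0 + ((ω.compr₂ (psi R π k B)).compl₁₂ (lam R π k B) (lam R π k B))

theorem Wbr_apply (ω : Lbar R π k B →ₗ[Rmod R π (k + 1)] Lbar R π k B →ₗ[Rmod R π (k + 1)] Lbar R π k B)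
    (x y : B) :
    Wbr R π k B br0 ω x y = br0 x y + psi R π k B (ω (lam R π k B x) (lam R π k B y)) := rfl

theorem Wbr_lift (ω : Lbar R π k B →ₗ[Rmod R π (k + 1)] Lbar R π k B →ₗ[Rmod R π (k + 1)] Lbar R π k B)
    (x y : B) :
    modk R π k B (Wbr R π k B br0 ω x y) = modk R π k B (br0 x y) := by
  rw [Wbr_apply, map_add, modk_psi, add_zero]

/-- the 2-form associated to a lift `br` of `L` -/
noncomputable def omof (hπ : Irreducible π) (br : B →ₗ[Rmod R π (k + 1)] B →ₗ[Rmod R π (k + 1)] B)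
    (hbr : ∀ x y, modk R π k B (br x y) = modk R π k B (br0 x y)) :
    Lbar R π k B →ₗ[Rmod R π (k + 1)] Lbar R π k B →ₗ[Rmod R π (k + 1)] Lbar R π k B :=
  red2 R π k B hπ (br - br0) (fun x y => by
    have := sub_mem_pikB R π k B br0 br hbr x y
    simpa [LinearMap.sub_apply] using this)

theorem omof_spec (hπ : Irreducible π) (br : B →ₗ[Rmod R π (k + 1)] B →ₗ[Rmod R π (k + 1)] B)
    (hbr : ∀ x y, modk R π k B (br x y) = modk R π k B (br0 x y)) (x y : B) :
    psi R π k B (omof R π k B br0 hπ br hbr (lam R π k B x) (lam R π k B y))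
      = br x y - br0 x y := by
  unfold omof
  rw [red2_spec]
  simp [LinearMap.sub_apply]

theorem Wbr_omof (hπ : Irreducible π) (br : B →ₗ[Rmod R π (k + 1)] B →ₗ[Rmod R π (k + 1)] B)
    (hbr : ∀ x y, modk R π k B (br x y) = modk R π k B (br0 x y)) :
    Wbr R π k B br0 (omof R π k B br0 hπ br hbr) = br := by
  refine LinearMap.ext fun x => LinearMap.ext fun y => ?_
  rw [Wbr_apply, omof_spec]
  abel

theorem omof_Wbr (hπ : Irreducible π) (ω : Lbar R π k B →ₗ[Rmod R π (k + 1)] Lbar R π k B →ₗ[Rmod R π (k + 1)] Lbar R π k B)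
    (hbr : ∀ x y, modk R π k B (Wbr R π k B br0 ω x y) = modk R π k B (br0 x y)) :
    omof R π k B br0 hπ (Wbr R π k B br0 ω) hbr = ω := by
  refine LinearMap.ext fun u => LinearMap.ext fun v => ?_
  obtain ⟨x, rfl⟩ := lam_surjective R π k B u
  obtain ⟨y, rfl⟩ := lam_surjective R π k B v
  apply psi_injective R π k B hπ
  rw [omof_spec, Wbr_apply]
  abel

theorem jac_expand (hk : 1 ≤ k)
    (hbrb : ∀ x y : B, lam R π k B (br0 x y) = brb (lam R π k B x) (lam R π k B y)) (ω : Lbar R π k B →ₗ[Rmod R π (k + 1)] Lbar R π k B →ₗ[Rmod R π (k + 1)] Lbar R π k B)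
    (x y z : B) :
    Wbr R π k B br0 ω (Wbr R π k B br0 ω x y) z
      = br0 (br0 x y) z
        + psi R π k B (brb (ω (lam R π k B x) (lam R π k B y)) (lam R π k B z)
            + ω (brb (lam R π k B x) (lam R π k B y)) (lam R π k B z)) := by
  rw [Wbr_apply, Wbr_apply, map_add, LinearMap.add_apply,
    lift_psi_left R π k B br0 brb hbrb hk br0 (fun _ _ => rfl),
    map_add (lam R π k B), lam_psi R π k B hk, add_zero, hbrb, map_add (psi R π k B)]
  abel

theorem jac_sum (hk : 1 ≤ k)
    (hbrb : ∀ x y : B, lam R π k B (br0 x y) = brb (lam R π k B x) (lam R π k B y)) (ω : Lbar R π k B →ₗ[Rmod R π (k + 1)] Lbar R π k B →ₗ[Rmod R π (k + 1)] Lbar R π k B)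
    (x y z : B) :
    Wbr R π k B br0 ω (Wbr R π k B br0 ω x y) z + Wbr R π k B br0 ω (Wbr R π k B br0 ω y z) x
      + Wbr R π k B br0 ω (Wbr R π k B br0 ω z x) y
      = (br0 (br0 x y) z + br0 (br0 y z) x + br0 (br0 z x) y)
        + psi R π k B
          (brb (ω (lam R π k B x) (lam R π k B y)) (lam R π k B z)
            + ω (brb (lam R π k B x) (lam R π k B y)) (lam R π k B z)
            + (brb (ω (lam R π k B y) (lam R π k B z)) (lam R π k B x)
              + ω (brb (lam R π k B y) (lam R π k B z)) (lam R π k B x))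
            + (brb (ω (lam R π k B z) (lam R π k B x)) (lam R π k B y)
              + ω (brb (lam R π k B z) (lam R π k B x)) (lam R π k B y))) := by
  rw [jac_expand R π k B br0 brb hk hbrb ω x y z, jac_expand R π k B br0 brb hk hbrb ω y z x,
    jac_expand R π k B br0 brb hk hbrb ω z x y]
  simp only [map_add]
  abel

theorem S3_eq_neg_T (hbrb : ∀ x y : B, lam R π k B (br0 x y) = brb (lam R π k B x) (lam R π k B y)) (halt0 : ∀ v, br0 v v = 0)
    (ω : Lbar R π k B →ₗ[Rmod R π (k + 1)] Lbar R π k B →ₗ[Rmod R π (k + 1)] Lbar R π k B)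
    (hωalt : ∀ v, ω v v = 0) (u v w : Lbar R π k B) :
    brb (ω u v) w + ω (brb u v) w + (brb (ω v w) u + ω (brb v w) u)
      + (brb (ω w u) v + ω (brb w u) v)
      = -(brb u (ω v w) - brb v (ω u w) + brb w (ω u v) - ω (brb u v) w + ω (brb u w) v
          - ω (brb v w) u) := by
  have hba := bilin_antisymm brb (brb_alt R π k B br0 brb hbrb halt0)
  have hωa := bilin_antisymm ω hωalt
  have e1 : brb (ω u v) w = -brb w (ω u v) := hba _ _
  have e2 : brb (ω v w) u = -brb u (ω v w) := hba _ _
  have e3 : brb (ω w u) v = brb v (ω u w) := by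
    rw [hωa w u, map_neg, LinearMap.neg_apply, hba (ω u w) v, neg_neg]
  have e4 : ω (brb w u) v = -ω (brb u w) v := by
    rw [hba w u, map_neg, LinearMap.neg_apply]
  rw [e1, e2, e3, e4]
  abel

noncomputable def Nmap (φ : Lbar R π k B →ₗ[Rmod R π (k + 1)] Lbar R π k B) :
    B →ₗ[Rmod R π (k + 1)] B :=
  psi R π k B ∘ₗ φ ∘ₗ lam R π k B

theorem Nmap_apply (φ : Lbar R π k B →ₗ[Rmod R π (k + 1)] Lbar R π k B) (x : B) :
    Nmap R π k B φ x = psi R π k B (φ (lam R π k B x)) := rfl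

theorem Nmap_Nmap (hk : 1 ≤ k) (φ : Lbar R π k B →ₗ[Rmod R π (k + 1)] Lbar R π k B) (x : B) :
    Nmap R π k B φ (Nmap R π k B φ x) = 0 := by
  rw [Nmap_apply, Nmap_apply, lam_psi R π k B hk, map_zero, map_zero]

noncomputable def PsiEquiv (hk : 1 ≤ k) (φ : Lbar R π k B →ₗ[Rmod R π (k + 1)] Lbar R π k B) :
    B ≃ₗ[Rmod R π (k + 1)] B :=
  LinearEquiv.ofLinear (LinearMap.id + Nmap R π k B φ) (LinearMap.id - Nmap R π k B φ)
    (by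
      refine LinearMap.ext fun x => ?_
      simp only [LinearMap.comp_apply, LinearMap.add_apply, LinearMap.sub_apply,
        LinearMap.id_apply, map_sub]
      rw [Nmap_Nmap R π k B hk]
      abel)
    (by
      refine LinearMap.ext fun x => ?_
      simp only [LinearMap.comp_apply, LinearMap.add_apply, LinearMap.sub_apply,
        LinearMap.id_apply, map_add]
      rw [Nmap_Nmap R π k B hk]
      abel)

theorem PsiEquiv_apply (hk : 1 ≤ k) (φ : Lbar R π k B →ₗ[Rmod R π (k + 1)] Lbar R π k B) (x : B) :
    PsiEquiv R π k B hk φ x = x + psi R π k B (φ (lam R π k B x)) := rfl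

theorem lift_expand (hk : 1 ≤ k)
    (hbrb : ∀ x y : B, lam R π k B (br0 x y) = brb (lam R π k B x) (lam R π k B y)) (br : B →ₗ[Rmod R π (k + 1)] B →ₗ[Rmod R π (k + 1)] B)
    (hbr : ∀ x y, modk R π k B (br x y) = modk R π k B (br0 x y))
    (φ : Lbar R π k B →ₗ[Rmod R π (k + 1)] Lbar R π k B) (x y : B) :
    br (x + psi R π k B (φ (lam R π k B x))) (y + psi R π k B (φ (lam R π k B y)))
      = br x y + psi R π k B (brb (φ (lam R π k B x)) (lam R π k B y)
          + brb (lam R π k B x) (φ (lam R π k B y))) := by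
  simp only [map_add, LinearMap.add_apply]
  rw [lift_psi_left R π k B br0 brb hbrb hk br hbr,
    lift_psi_right R π k B br0 brb hbrb hk br hbr,
    lift_psi_both R π k B br0 brb hbrb hk br hbr]
  abel

end Aux4

set_option maxHeartbeats 2000000 in
/-- Suppose the Lie algebra `L = B/π^k B` over `R_k` admits a Lie algebra
lift `[·,·]₀` to `R_{k+1}` on the free module `B`.  Then the set of all Lie algebra lifts
of `L` to `R_{k+1}`, up to isomorphisms of Lie algebras inducing the identity on `L`, is
in bijection with `H²(L̄, ad)`, realized as Chevalley–Eilenberg 2-cocycles (alternating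
2-forms `ω` with `dω = 0`) modulo coboundaries of 1-cochains. -/
theorem stmt_16 (R : Type) [CommRing R] [IsDomain R] [IsDiscreteValuationRing R]
    (π : R) (hπ : Irreducible π) (k : ℕ) (hk : 1 ≤ k)
    (B : Type) [AddCommGroup B] [Module (Rmod R π (k + 1)) B]
    [Module.Free (Rmod R π (k + 1)) B] [Module.Finite (Rmod R π (k + 1)) B]
    (brL : Lred R π k B →ₗ[Rmod R π (k + 1)] Lred R π k B →ₗ[Rmod R π (k + 1)] Lred R π k B)
    (haltL : ∀ v, brL v v = 0)
    (hjacL : ∀ x y z : Lred R π k B, brL (brL x y) z + brL (brL y z) x + brL (brL z x) y = 0)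
    (br0 : B →ₗ[Rmod R π (k + 1)] B →ₗ[Rmod R π (k + 1)] B)
    (halt0 : ∀ v, br0 v v = 0)
    (hjac0 : ∀ x y z : B, br0 (br0 x y) z + br0 (br0 y z) x + br0 (br0 z x) y = 0)
    (hlift0 : ∀ x y : B, modk R π k B (br0 x y) = brL (modk R π k B x) (modk R π k B y))
    (brb : Lbar R π k B →ₗ[Rmod R π (k + 1)] Lbar R π k B →ₗ[Rmod R π (k + 1)] Lbar R π k B)
    (hbrb : ∀ x y : B, lam R π k B (br0 x y) = brb (lam R π k B x) (lam R π k B y)) :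
    Nonempty (
      Quot (fun (b1 b2 : {br : B →ₗ[Rmod R π (k + 1)] B →ₗ[Rmod R π (k + 1)] B //
          (∀ v, br v v = 0) ∧
          (∀ x y z : B, br (br x y) z + br (br y z) x + br (br z x) y = 0) ∧
          (∀ x y : B, modk R π k B (br x y) = brL (modk R π k B x) (modk R π k B y))}) =>
        ∃ Ψ : B ≃ₗ[Rmod R π (k + 1)] B,
          (∀ x y : B, b2.1 (Ψ x) (Ψ y) = Ψ (b1.1 x y)) ∧
          (∀ x : B, modk R π k B (Ψ x) = modk R π k B x)) ≃
      Quot (fun (w1 w2 : {form : Lbar R π k B →ₗ[Rmod R π (k + 1)] Lbar R π k B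
            →ₗ[Rmod R π (k + 1)] Lbar R π k B //
          (∀ v, form v v = 0) ∧
          (∀ x y z : Lbar R π k B,
            brb x (form y z) - brb y (form x z) + brb z (form x y)
              - form (brb x y) z + form (brb x z) y - form (brb y z) x = 0)}) =>
        ∃ φ : Lbar R π k B →ₗ[Rmod R π (k + 1)] Lbar R π k B,
          ∀ u v : Lbar R π k B,
            w2.1 u v - w1.1 u v = -(-φ (brb u v) + brb u (φ v) - brb v (φ u)))) := by
    classical
  have hψinj := psi_injective R π k B hπ
  have hconv : ∀ (br : B →ₗ[Rmod R π (k + 1)] B →ₗ[Rmod R π (k + 1)] B),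
      (∀ x y : B, modk R π k B (br x y) = brL (modk R π k B x) (modk R π k B y)) →
      (∀ x y, modk R π k B (br x y) = modk R π k B (br0 x y)) := by
    intro br h x y
    rw [h, hlift0]
  -- alternation of the associated 2-form
  have homof_alt : ∀ (br : B →ₗ[Rmod R π (k + 1)] B →ₗ[Rmod R π (k + 1)] B)
      (hbr : ∀ x y, modk R π k B (br x y) = modk R π k B (br0 x y))
      (haltbr : ∀ v, br v v = 0) (v : Lbar R π k B),
      omof R π k B br0 hπ br hbr v v = 0 := by
    intro br hbr haltbr v
    obtain ⟨x, rfl⟩ := lam_surjective R π k B v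
    apply hψinj
    rw [map_zero, omof_spec, haltbr, halt0, sub_zero]
  -- cocycle condition for the associated 2-form
  have hcocycle : ∀ (br : B →ₗ[Rmod R π (k + 1)] B →ₗ[Rmod R π (k + 1)] B)
      (hbr : ∀ x y, modk R π k B (br x y) = modk R π k B (br0 x y))
      (haltbr : ∀ v, br v v = 0)
      (hjacbr : ∀ x y z : B, br (br x y) z + br (br y z) x + br (br z x) y = 0),
      ∀ u v w : Lbar R π k B,
        brb u (omof R π k B br0 hπ br hbr v w) - brb v (omof R π k B br0 hπ br hbr u w)
          + brb w (omof R π k B br0 hπ br hbr u v)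
          - omof R π k B br0 hπ br hbr (brb u v) w
          + omof R π k B br0 hπ br hbr (brb u w) v
          - omof R π k B br0 hπ br hbr (brb v w) u = 0 := by
    intro br hbr haltbr hjacbr u v w
    obtain ⟨x, rfl⟩ := lam_surjective R π k B u
    obtain ⟨y, rfl⟩ := lam_surjective R π k B v
    obtain ⟨z, rfl⟩ := lam_surjective R π k B w
    have hS : brb (omof R π k B br0 hπ br hbr (lam R π k B x) (lam R π k B y)) (lam R π k B z)
        + omof R π k B br0 hπ br hbr (brb (lam R π k B x) (lam R π k B y)) (lam R π k B z)
        + (brb (omof R π k B br0 hπ br hbr (lam R π k B y) (lam R π k B z)) (lam R π k B x)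
          + omof R π k B br0 hπ br hbr (brb (lam R π k B y) (lam R π k B z)) (lam R π k B x))
        + (brb (omof R π k B br0 hπ br hbr (lam R π k B z) (lam R π k B x)) (lam R π k B y)
          + omof R π k B br0 hπ br hbr (brb (lam R π k B z) (lam R π k B x)) (lam R π k B y))
        = 0 := by
      apply hψinj
      rw [map_zero]
      have hjs := jac_sum R π k B br0 brb hk hbrb (omof R π k B br0 hπ br hbr) x y z
      rw [Wbr_omof R π k B br0 hπ br hbr] at hjs
      rw [hjacbr x y z, hjac0 x y z, zero_add] at hjs
      exact hjs.symm
    have hT := S3_eq_neg_T R π k B br0 brb hbrb halt0 (omof R π k B br0 hπ br hbr)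
      (homof_alt br hbr haltbr) (lam R π k B x) (lam R π k B y) (lam R π k B z)
    rw [hS] at hT
    exact neg_eq_zero.mp hT.symm
  -- Jacobi identity for the lift associated to a cocycle
  have hjacW : ∀ (ω : Lbar R π k B →ₗ[Rmod R π (k + 1)] Lbar R π k B →ₗ[Rmod R π (k + 1)] Lbar R π k B)
      (hωalt : ∀ v, ω v v = 0)
      (hωcoc : ∀ u v w : Lbar R π k B,
        brb u (ω v w) - brb v (ω u w) + brb w (ω u v)
          - ω (brb u v) w + ω (brb u w) v - ω (brb v w) u = 0),
      ∀ x y z : B,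
        Wbr R π k B br0 ω (Wbr R π k B br0 ω x y) z
          + Wbr R π k B br0 ω (Wbr R π k B br0 ω y z) x
          + Wbr R π k B br0 ω (Wbr R π k B br0 ω z x) y = 0 := by
    intro ω hωalt hωcoc x y z
    have hjs := jac_sum R π k B br0 brb hk hbrb ω x y z
    have hS3 := S3_eq_neg_T R π k B br0 brb hbrb halt0 ω hωalt
      (lam R π k B x) (lam R π k B y) (lam R π k B z)
    rw [hωcoc, neg_zero] at hS3
    rw [hjs, hjac0 x y z, hS3, map_zero, add_zero]
  have hWalt : ∀ (ω : Lbar R π k B →ₗ[Rmod R π (k + 1)] Lbar R π k B →ₗ[Rmod R π (k + 1)] Lbar R π k B)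
      (hωalt : ∀ v, ω v v = 0) (v : B), Wbr R π k B br0 ω v v = 0 := by
    intro ω hωalt v
    rw [Wbr_apply, halt0, hωalt, map_zero, add_zero]
  have hWlift2 : ∀ (ω : Lbar R π k B →ₗ[Rmod R π (k + 1)] Lbar R π k B →ₗ[Rmod R π (k + 1)] Lbar R π k B)
      (x y : B), modk R π k B (Wbr R π k B br0 ω x y)
        = brL (modk R π k B x) (modk R π k B y) := by
    intro ω x y
    rw [Wbr_lift, hlift0]
  refine ⟨⟨Quot.map (fun b => ⟨omof R π k B br0 hπ b.1 (hconv b.1 b.2.2.2),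
      homof_alt b.1 (hconv b.1 b.2.2.2) b.2.1,
      hcocycle b.1 (hconv b.1 b.2.2.2) b.2.1 b.2.2.1⟩) ?_,
    Quot.map (fun w => ⟨Wbr R π k B br0 w.1, hWalt w.1 w.2.1, hjacW w.1 w.2.1 w.2.2,
      hWlift2 w.1⟩) ?_, ?_, ?_⟩⟩
  · -- forward relation preservation
    rintro b1 b2 ⟨Ψ, hΨ1, hΨ2⟩
    dsimp only
    have hb1 : ∀ x y, modk R π k B (b1.1 x y) = modk R π k B (br0 x y) := hconv b1.1 b1.2.2.2
    have hb2 : ∀ x y, modk R π k B (b2.1 x y) = modk R π k B (br0 x y) := hconv b2.1 b2.2.2.2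
    set E : B →ₗ[Rmod R π (k + 1)] B := Ψ.toLinearMap - LinearMap.id with hEdef
    have hEmem : ∀ x, E x ∈ pikB R π k B := by
      intro x
      have h1 : modk R π k B (E x) = 0 := by
        rw [hEdef, LinearMap.sub_apply, LinearMap.id_apply, map_sub, LinearEquiv.coe_coe, hΨ2,
          sub_self]
      rwa [← LinearMap.mem_ker, Submodule.ker_mkQ] at h1
    set φ := red1 R π k B hπ E hEmem with hφdef
    have hφ : ∀ z : B, psi R π k B (φ (lam R π k B z)) = Ψ z - z := by
      intro z
      rw [hφdef, red1_spec, hEdef, LinearMap.sub_apply, LinearMap.id_apply, LinearEquiv.coe_coe]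
    refine ⟨φ, ?_⟩
    intro u v
    obtain ⟨x, rfl⟩ := lam_surjective R π k B u
    obtain ⟨y, rfl⟩ := lam_surjective R π k B v
    apply hψinj
    have key : Ψ (b1.1 x y) = b2.1 x y
        + psi R π k B (brb (φ (lam R π k B x)) (lam R π k B y))
        + psi R π k B (brb (lam R π k B x) (φ (lam R π k B y))) := by
      rw [← hΨ1 x y]
      have hx : Ψ x = x + psi R π k B (φ (lam R π k B x)) := by rw [hφ x]; abel
      have hy : Ψ y = y + psi R π k B (φ (lam R π k B y)) := by rw [hφ y]; abel
      rw [hx, hy, lift_expand R π k B br0 brb hk hbrb b2.1 hb2 φ x y, map_add]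
      abel
    have h5 : brb (lam R π k B x) (lam R π k B y) = lam R π k B (b1.1 x y) :=
      (lam_br R π k B br0 brb hbrb hk b1.1 hb1 x y).symm
    have h6 : brb (lam R π k B y) (φ (lam R π k B x))
        = -brb (φ (lam R π k B x)) (lam R π k B y) :=
      bilin_antisymm brb (brb_alt R π k B br0 brb hbrb halt0) _ _
    simp only [map_sub, map_neg, map_add]
    rw [omof_spec, omof_spec, h5, hφ (b1.1 x y), h6, map_neg, key]
    abel
  · -- backward relation preservation
    rintro w1 w2 ⟨φ, hφrel⟩
    dsimp only
    have hb1 : ∀ x y, modk R π k B (Wbr R π k B br0 w1.1 x y) = modk R π k B (br0 x y) :=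
      fun x y => Wbr_lift R π k B br0 w1.1 x y
    have hb2 : ∀ x y, modk R π k B (Wbr R π k B br0 w2.1 x y) = modk R π k B (br0 x y) :=
      fun x y => Wbr_lift R π k B br0 w2.1 x y
    refine ⟨PsiEquiv R π k B hk φ, ?_, ?_⟩
    · intro x y
      rw [PsiEquiv_apply, PsiEquiv_apply, PsiEquiv_apply,
        lift_expand R π k B br0 brb hk hbrb (Wbr R π k B br0 w2.1) hb2 φ x y,
        lam_br R π k B br0 brb hbrb hk (Wbr R π k B br0 w1.1) hb1 x y,
        Wbr_apply, Wbr_apply, map_add]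
      have h0 := hφrel (lam R π k B x) (lam R π k B y)
      have h3 := congrArg (psi R π k B) h0
      simp only [map_sub, map_neg, map_add] at h3
      rw [sub_eq_iff_eq_add] at h3
      rw [h3]
      have h6 : psi R π k B (brb (lam R π k B y) (φ (lam R π k B x)))
          = -psi R π k B (brb (φ (lam R π k B x)) (lam R π k B y)) := by
        rw [bilin_antisymm brb (brb_alt R π k B br0 brb hbrb halt0) (lam R π k B y)
          (φ (lam R π k B x)), map_neg]
      rw [h6]
      abel
    · intro x
      rw [PsiEquiv_apply, map_add, modk_psi, add_zero]
  · -- left inverse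
    refine Quot.ind fun b => ?_
    exact congrArg (Quot.mk _) (Subtype.ext (Wbr_omof R π k B br0 hπ b.1 (hconv b.1 b.2.2.2)))
  · -- right inverse
    refine Quot.ind fun w => ?_
    exact congrArg (Quot.mk _) (Subtype.ext (omof_Wbr R π k B br0 hπ w.1
      (hconv (Wbr R π k B br0 w.1) (hWlift2 w.1))))
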